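/- Let A be an N×N integer matrix and A_- its Cuntz splice. The map ξ_A : Z^N → Z^{N+2}, x ↦ (x,0,0), induces a group isomorphism from G(A) = Z^N/(1-A^t)Z^N onto G(A_-) = Z^{N+2}/(1-A_-^t)Z^{N+2}, sending the class of (1,...,1,0) in G(A) to the class of (1,...,1,1,1) in G(A_-). -/

import Mathlib

/-- Cuntz splice of an `M × M` matrix `B` (`M = m+1`): the `(M+2) × (M+2)` matrix whose
upper-left `M × M` block is `B`, with (1-based) entries
`B₋(M,M+1) = B₋(M+1,M) = B₋(M+1,M+1) = B₋(M+1,M+2) = B₋(M+2,M+1) = B₋(M+2,M+2) = 1`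
and all other new entries `0`. -/
def cuntzSplice {m : ℕ} (B : Matrix (Fin (m+1)) (Fin (m+1)) ℤ) :
    Matrix (Fin (m+3)) (Fin (m+3)) ℤ :=
  Matrix.of fun i j =>
    if hi : (i : ℕ) < m + 1 then
      if hj : (j : ℕ) < m + 1 then B ⟨i, hi⟩ ⟨j, hj⟩
      else if (i : ℕ) = m ∧ (j : ℕ) = m + 1 then 1 else 0
    else
      if (i : ℕ) = m + 1 then
        if (j : ℕ) = m ∨ (j : ℕ) = m + 1 ∨ (j : ℕ) = m + 2 then 1 else 0
      else
        if (j : ℕ) = m + 1 ∨ (j : ℕ) = m + 2 then 1 else 0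

/-- The subgroup `(1 - Bᵗ)ℤ^k` of `ℤ^k`, i.e. the image of `x ↦ (1 - Bᵗ)x`. -/
def bfSubgroup {k : ℕ} (B : Matrix (Fin k) (Fin k) ℤ) : Submodule ℤ (Fin k → ℤ) :=
  LinearMap.range (Matrix.mulVecLin (1 - B.transpose))

/-- The map `ξ : ℤ^N → ℤ^{N+2}`, `(x_1,…,x_N) ↦ (x_1,…,x_N,0,0)` (`N = n+1`). -/
def xiMap {n : ℕ} (x : Fin (n+1) → ℤ) : Fin (n+3) → ℤ :=
  fun j => if hj : (j : ℕ) < n + 1 then x ⟨j, hj⟩ else 0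

namespace CuntzAux

variable {n : ℕ}

def emb (i : Fin (n+1)) : Fin (n+3) := ⟨i, by omega⟩
def pIdx (n : ℕ) : Fin (n+3) := ⟨n+1, by omega⟩
def qIdx (n : ℕ) : Fin (n+3) := ⟨n+2, by omega⟩

@[simp] lemma val_emb (i : Fin (n+1)) : ((emb i : Fin (n+3)) : ℕ) = i := rfl
@[simp] lemma val_p : ((pIdx n : Fin (n+3)) : ℕ) = n+1 := rfl
@[simp] lemma val_q : ((qIdx n : Fin (n+3)) : ℕ) = n+2 := rfl

lemma cases3 (i : Fin (n+3)) : (∃ i', i = emb i') ∨ i = pIdx n ∨ i = qIdx n := by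
  rcases lt_trichotomy (i : ℕ) (n+1) with h | h | h
  · exact Or.inl ⟨⟨i, h⟩, by ext; simp [emb]⟩
  · exact Or.inr (Or.inl (by ext; simp [h]))
  · exact Or.inr (Or.inr (by ext; simp; omega))

variable (A : Matrix (Fin (n+1)) (Fin (n+1)) ℤ)

@[simp] lemma entry_emb_emb (i j : Fin (n+1)) : cuntzSplice A (emb i) (emb j) = A i j := by
  simp only [cuntzSplice, Matrix.of_apply]
  rw [dif_pos (show ((emb i : Fin (n+3)) : ℕ) < n+1 from i.isLt), dif_pos (show ((emb j : Fin (n+3)) : ℕ) < n+1 from j.isLt)]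
  rfl

@[simp] lemma entry_emb_p (i : Fin (n+1)) :
    cuntzSplice A (emb i) (pIdx n) = if i = Fin.last n then 1 else 0 := by
  simp only [cuntzSplice, Matrix.of_apply, val_emb, val_p]
  rw [dif_pos i.isLt, dif_neg (by omega)]
  simp [Fin.ext_iff, Fin.last]

@[simp] lemma entry_emb_q (i : Fin (n+1)) : cuntzSplice A (emb i) (qIdx n) = 0 := by
  simp only [cuntzSplice, Matrix.of_apply]
  rw [dif_pos (show ((emb i : Fin (n+3)) : ℕ) < n+1 from i.isLt), dif_neg (show ¬ ((qIdx n : Fin (n+3)) : ℕ) < n+1 by simp), if_neg (by simp)]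

@[simp] lemma entry_p_emb (j : Fin (n+1)) :
    cuntzSplice A (pIdx n) (emb j) = if j = Fin.last n then 1 else 0 := by
  have hj := j.isLt
  simp only [cuntzSplice, Matrix.of_apply, val_emb, val_p]
  rw [dif_neg (by omega)]
  simp only [Fin.ext_iff, Fin.val_last, if_true, eq_self_iff_true]
  split_ifs <;> first | rfl | omega | tauto

@[simp] lemma entry_p_p : cuntzSplice A (pIdx n) (pIdx n) = 1 := by
  simp only [cuntzSplice, Matrix.of_apply, val_p]
  rw [dif_neg (by omega)]
  split_ifs <;> first | rfl | omega | tauto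

@[simp] lemma entry_p_q : cuntzSplice A (pIdx n) (qIdx n) = 1 := by
  simp only [cuntzSplice, Matrix.of_apply, val_p, val_q]
  rw [dif_neg (by omega)]
  split_ifs <;> first | rfl | omega | tauto

@[simp] lemma entry_q_emb (j : Fin (n+1)) : cuntzSplice A (qIdx n) (emb j) = 0 := by
  have hj := j.isLt
  simp only [cuntzSplice, Matrix.of_apply]
  rw [dif_neg (show ¬ ((qIdx n : Fin (n+3)) : ℕ) < n+1 by simp), if_neg (by simp), if_neg (by simp; omega)]

@[simp] lemma entry_q_p : cuntzSplice A (qIdx n) (pIdx n) = 1 := by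
  simp only [cuntzSplice, Matrix.of_apply, val_p, val_q]
  rw [dif_neg (by omega)]
  split_ifs <;> first | rfl | omega | tauto

@[simp] lemma entry_q_q : cuntzSplice A (qIdx n) (qIdx n) = 1 := by
  simp only [cuntzSplice, Matrix.of_apply, val_q]
  rw [dif_neg (by omega)]
  split_ifs <;> first | rfl | omega | tauto

lemma sum3 (f : Fin (n+3) → ℤ) :
    ∑ j, f j = (∑ j : Fin (n+1), f (emb j)) + f (pIdx n) + f (qIdx n) := by
  rw [Fin.sum_univ_castSucc, Fin.sum_univ_castSucc]
  have h1 : ∀ j : Fin (n+1), (j.castSucc.castSucc : Fin (n+3)) = emb j := fun j => by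
    ext; simp [emb]
  have h2 : ((Fin.last (n+1)).castSucc : Fin (n+3)) = pIdx n := by ext; simp [pIdx]
  have h3 : (Fin.last (n+2) : Fin (n+3)) = qIdx n := by ext; simp [qIdx]
  simp only [h1, h2, h3]

lemma mulVec_sub_eq {k : ℕ} (B : Matrix (Fin k) (Fin k) ℤ) (y : Fin k → ℤ) (i : Fin k) :
    (1 - B.transpose).mulVec y i = y i - ∑ j, B j i * y j := by
  simp [Matrix.sub_mulVec, Matrix.mulVec, dotProduct, Matrix.transpose_apply,
    sub_mul, Finset.sum_sub_distrib, Matrix.one_apply, ite_mul, one_mul, zero_mul,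
    Finset.sum_ite_eq]

lemma mulVec_cuntz (v : Fin (n+3) → ℤ) (i : Fin (n+3)) :
    (1 - (cuntzSplice A).transpose).mulVec v i =
      v i - ((∑ j : Fin (n+1), cuntzSplice A (emb j) i * v (emb j))
        + cuntzSplice A (pIdx n) i * v (pIdx n)
        + cuntzSplice A (qIdx n) i * v (qIdx n)) := by
  rw [mulVec_sub_eq, sum3]

@[simp] lemma xiMap_emb (x : Fin (n+1) → ℤ) (j : Fin (n+1)) : xiMap x (emb j) = x j := by
  show (if hj : ((emb j : Fin (n+3)) : ℕ) < n+1 then x ⟨(emb j : Fin (n+3)), hj⟩ else 0) = x j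
  rw [dif_pos (show ((emb j : Fin (n+3)) : ℕ) < n+1 from j.isLt)]
  exact congrArg x (Fin.ext rfl)

@[simp] lemma xiMap_p (x : Fin (n+1) → ℤ) : xiMap x (pIdx n) = 0 := by
  show (if hj : ((pIdx n : Fin (n+3)) : ℕ) < n+1 then x ⟨(pIdx n : Fin (n+3)), hj⟩ else 0) = 0
  rw [dif_neg (by simp)]

@[simp] lemma xiMap_q (x : Fin (n+1) → ℤ) : xiMap x (qIdx n) = 0 := by
  show (if hj : ((qIdx n : Fin (n+3)) : ℕ) < n+1 then x ⟨(qIdx n : Fin (n+3)), hj⟩ else 0) = 0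
  rw [dif_neg (by simp)]

/-- `ξ x - x_n e_{n+2}`. -/
def zVec (x : Fin (n+1) → ℤ) : Fin (n+3) → ℤ :=
  fun j => if hj : (j : ℕ) < n + 1 then x ⟨j, hj⟩
    else if (j : ℕ) = n + 2 then -(x (Fin.last n)) else 0

@[simp] lemma zVec_emb (x : Fin (n+1) → ℤ) (j : Fin (n+1)) : zVec x (emb j) = x j := by
  unfold zVec
  rw [dif_pos (show ((emb j : Fin (n+3)) : ℕ) < n+1 from j.isLt)]
  exact congrArg x (Fin.ext rfl)

@[simp] lemma zVec_p (x : Fin (n+1) → ℤ) : zVec x (pIdx n) = 0 := by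
  unfold zVec
  rw [dif_neg (by simp), if_neg (by simp)]

@[simp] lemma zVec_q (x : Fin (n+1) → ℤ) : zVec x (qIdx n) = -(x (Fin.last n)) := by
  unfold zVec
  rw [dif_neg (by simp), if_pos (by simp)]

def psiFun (y : Fin (n+3) → ℤ) : Fin (n+1) → ℤ :=
  fun i => y (emb i) - (if i = Fin.last n then y (qIdx n) else 0)

def uVec (y : Fin (n+3) → ℤ) : Fin (n+3) → ℤ :=
  fun j => if j = pIdx n then y (qIdx n) else if j = qIdx n then y (pIdx n) else 0

@[simp] lemma uVec_emb (y : Fin (n+3) → ℤ) (j : Fin (n+1)) : uVec y (emb j) = 0 := by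
  have hj := j.isLt
  unfold uVec
  rw [if_neg (by simp [Fin.ext_iff]; omega), if_neg (by simp [Fin.ext_iff]; omega)]

@[simp] lemma uVec_p (y : Fin (n+3) → ℤ) : uVec y (pIdx n) = y (qIdx n) := by
  simp [uVec]

@[simp] lemma uVec_q (y : Fin (n+3) → ℤ) : uVec y (qIdx n) = y (pIdx n) := by
  unfold uVec
  rw [if_neg (by simp [Fin.ext_iff]), if_pos rfl]

def tVec (n : ℕ) : Fin (n+3) → ℤ := fun j => if (j : ℕ) < n + 1 then 0 else 1

@[simp] lemma tVec_emb (j : Fin (n+1)) : tVec n (emb j) = 0 := if_pos j.isLt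
@[simp] lemma tVec_p : tVec n (pIdx n) = 1 := if_neg (by simp)
@[simp] lemma tVec_q : tVec n (qIdx n) = 1 := if_neg (by simp)

lemma key1 (x : Fin (n+1) → ℤ) :
    (1 - (cuntzSplice A).transpose).mulVec (zVec x) = xiMap ((1 - A.transpose).mulVec x) := by
  funext i
  rcases cases3 i with ⟨i', rfl⟩ | rfl | rfl
  · rw [mulVec_cuntz, xiMap_emb, mulVec_sub_eq]
    simp
  · rw [mulVec_cuntz, xiMap_p]
    simp [ite_mul, Finset.sum_ite_eq']
  · rw [mulVec_cuntz, xiMap_q]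
    simp

lemma key2 (y : Fin (n+3) → ℤ) :
    psiFun ((1 - (cuntzSplice A).transpose).mulVec y)
      = (1 - A.transpose).mulVec (fun i => y (emb i)) := by
  funext i
  unfold psiFun
  rw [mulVec_cuntz, mulVec_cuntz, mulVec_sub_eq]
  simp only [entry_emb_emb, entry_p_emb, entry_q_emb, entry_emb_q, entry_p_q, entry_q_q,
    zero_mul, one_mul, add_zero, zero_add, ite_mul, Finset.sum_ite_eq', Finset.mem_univ,
    if_true, Finset.sum_const_zero]
  split_ifs with h
  · subst h; ring
  · ring

lemma key3 (y : Fin (n+3) → ℤ) :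
    xiMap (psiFun y) - y = (1 - (cuntzSplice A).transpose).mulVec (uVec y) := by
  funext i
  rcases cases3 i with ⟨i', rfl⟩ | rfl | rfl <;>
    rw [Pi.sub_apply, mulVec_cuntz] <;>
    simp [psiFun] <;> split_ifs <;> ring

lemma key4 :
    xiMap (fun i : Fin (n+1) => if (i : ℕ) = n then 0 else 1) - (fun _ : Fin (n+3) => (1:ℤ))
      = (1 - (cuntzSplice A).transpose).mulVec (tVec n) := by
  funext i
  rcases cases3 i with ⟨i', rfl⟩ | rfl | rfl <;> rw [Pi.sub_apply, mulVec_cuntz]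
  · simp only [xiMap_emb, tVec_emb, tVec_p, tVec_q, entry_emb_emb, entry_p_emb, entry_q_emb,
      mul_zero, one_mul, Finset.sum_const_zero, zero_add, mul_one, zero_mul, add_zero]
    have h : (i' = Fin.last n) ↔ ((i' : ℕ) = n) := by simp [Fin.ext_iff]
    rw [if_congr h rfl rfl]
    split_ifs <;> ring
  · simp
  · simp

lemma psiFun_xiMap (x : Fin (n+1) → ℤ) : psiFun (xiMap x) = x := by
  funext i
  simp [psiFun]

def xiLin : (Fin (n+1) → ℤ) →ₗ[ℤ] (Fin (n+3) → ℤ) where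
  toFun := xiMap
  map_add' x y := by
    funext j; simp only [xiMap, Pi.add_apply]; split_ifs <;> simp
  map_smul' c x := by
    funext j; simp only [xiMap, Pi.smul_apply, RingHom.id_apply, smul_eq_mul]
    split_ifs <;> simp

def psiLin : (Fin (n+3) → ℤ) →ₗ[ℤ] (Fin (n+1) → ℤ) where
  toFun := psiFun
  map_add' x y := by
    funext i; simp only [psiFun, Pi.add_apply]; split_ifs <;> ring
  map_smul' c x := by
    funext i; simp only [psiFun, Pi.smul_apply, RingHom.id_apply, smul_eq_mul]
    split_ifs <;> ring

end CuntzAux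

open CuntzAux

/-- The map `ξ_A : x ↦ (x,0,0)` induces a group isomorphism `G(A) ≅ G(A₋)` sending
the class of `(1,…,1,0)` (first `N-1` entries `1`, last entry `0`) to the class of
the all-ones vector `(1,…,1,1,1)`. -/
theorem xiMap_induces_isomorphism {n : ℕ} (A : Matrix (Fin (n+1)) (Fin (n+1)) ℤ) :
    ∃ e : ((Fin (n+1) → ℤ) ⧸ bfSubgroup A) ≃+
        ((Fin (n+3) → ℤ) ⧸ bfSubgroup (cuntzSplice A)),
      (∀ x : Fin (n+1) → ℤ,
        e (Submodule.Quotient.mk x) = Submodule.Quotient.mk (xiMap x)) ∧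
      e (Submodule.Quotient.mk (fun i : Fin (n+1) => if (i : ℕ) = n then 0 else 1))
        = Submodule.Quotient.mk (fun _ : Fin (n+3) => (1 : ℤ)) := by
  have hφ : bfSubgroup A ≤ (bfSubgroup (cuntzSplice A)).comap xiLin := by
    rintro _ ⟨x, rfl⟩
    exact ⟨zVec x, by simp only [Matrix.mulVecLin_apply]; exact key1 A x⟩
  have hψ : bfSubgroup (cuntzSplice A) ≤ (bfSubgroup A).comap psiLin := by
    rintro _ ⟨y, rfl⟩
    exact ⟨fun i => y (emb i), by simp only [Matrix.mulVecLin_apply]; exact (key2 A y).symm⟩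
  set φq := Submodule.mapQ (bfSubgroup A) (bfSubgroup (cuntzSplice A)) xiLin hφ with hφq
  set ψq := Submodule.mapQ (bfSubgroup (cuntzSplice A)) (bfSubgroup A) psiLin hψ with hψq
  have h1 : ψq.comp φq = LinearMap.id := by
    apply Submodule.linearMap_qext
    refine LinearMap.ext fun x => ?_
    simp only [LinearMap.comp_apply, Submodule.mkQ_apply, hφq, hψq, Submodule.mapQ_apply,
      LinearMap.id_apply]
    congr 1
    exact psiFun_xiMap x
  have h2 : φq.comp ψq = LinearMap.id := by
    apply Submodule.linearMap_qext
    refine LinearMap.ext fun y => ?_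
    simp only [LinearMap.comp_apply, Submodule.mkQ_apply, hφq, hψq, Submodule.mapQ_apply,
      LinearMap.id_apply]
    rw [Submodule.Quotient.eq]
    exact ⟨uVec y, by simp only [Matrix.mulVecLin_apply]; exact (key3 A y).symm⟩
  refine ⟨(LinearEquiv.ofLinear φq ψq h2 h1).toAddEquiv, fun x => ?_, ?_⟩
  · show φq (Submodule.Quotient.mk x) = _
    rw [hφq, Submodule.mapQ_apply]
    rfl
  · show φq (Submodule.Quotient.mk _) = _
    rw [hφq, Submodule.mapQ_apply]
    rw [Submodule.Quotient.eq]
    exact ⟨tVec n, by simp only [Matrix.mulVecLin_apply]; exact (key4 A).symm⟩
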